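/- With Y_1,…,Y_n pairwise commuting linear vector fields on ℝⁿ such that D := det ℓ ≠ 0: if D factors as D = D₁D₂ with D₁, D₂ homogeneous polynomials without common divisor, then D₁ and D₂ are themselves joint eigenvectors of the Y_i, i.e. there exist constants λ_i, μ_i ∈ ℝ with Y_i D₁ = λ_i D₁, Y_i D₂ = μ_i D₂, and λ_i + μ_i = div Y_i for all i. -/

import Mathlib

open MvPolynomial

/-- The action of the linear vector field `Y = Σ_{r,s} A r s • x_s ∂_r` on polynomials. -/
noncomputable def linVF {n : ℕ} (A : Matrix (Fin n) (Fin n) ℝ)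
    (P : MvPolynomial (Fin n) ℝ) : MvPolynomial (Fin n) ℝ :=
  ∑ r, (∑ s, C (A r s) * X s) * pderiv r P

/-- The matrix `ℓ` of coefficient linear forms of the vector fields `Y_i`. -/
noncomputable def coeffMat {n : ℕ} (a : Fin n → Matrix (Fin n) (Fin n) ℝ) :
    Matrix (Fin n) (Fin n) (MvPolynomial (Fin n) ℝ) :=
  fun i r => ∑ s, C (a i r s) * X s

namespace JointEV
open Finset
variable {n : ℕ}

abbrev MvP (n : ℕ) := MvPolynomial (Fin n) ℝ

lemma weightedHomogeneousComponent_of_isWeightedHomogeneous_ne {σ R M : Type*} [CommSemiring R]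
    [AddCommMonoid M] {w : σ → M} {m m' : M} {p : MvPolynomial σ R}
    (hp : p.IsWeightedHomogeneous w m) (hne : m' ≠ m) :
    weightedHomogeneousComponent w m' p = 0 := by
  classical
  rw [weightedHomogeneousComponent_of_mem hp, if_neg hne]

noncomputable def linDer (A : Matrix (Fin n) (Fin n) ℝ) : Derivation ℝ (MvP n) (MvP n) :=
  ∑ r, (∑ s, C (A r s) * X s) • pderiv r

lemma derSum {ι : Type*} [DecidableEq ι] (t : Finset ι) (f : ι → Derivation ℝ (MvP n) (MvP n)) (P : MvP n) :
    (∑ r ∈ t, f r) P = ∑ r ∈ t, f r P := by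
  induction t using Finset.induction_on with
  | empty => simp
  | @insert _ _ h ih => rw [Finset.sum_insert h, Finset.sum_insert h, Derivation.add_apply, ih]

lemma linVF_eq (A : Matrix (Fin n) (Fin n) ℝ) (P : MvP n) :
    linVF A P = linDer A P := by
  rw [linDer, derSum]
  simp [linVF, smul_eq_mul, Derivation.smul_apply]

lemma linDer_X (A : Matrix (Fin n) (Fin n) ℝ) (t : Fin n) :
    linDer A (X t) = ∑ s, C (A t s) * X s := by
  rw [← linVF_eq]
  simp only [linVF, pderiv_X]
  rw [Finset.sum_eq_single t]
  · simp
  · intro r _ hr; simp [Pi.single_apply, hr]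
  · simp

lemma linDer_C_mul (A : Matrix (Fin n) (Fin n) ℝ) (c : ℝ) (P : MvP n) :
    linDer A (C c * P) = C c * linDer A P := by
  rw [Derivation.leibniz, smul_eq_mul, smul_eq_mul]
  have : linDer A (C c) = 0 := by
    have : (C c : MvP n) = algebraMap ℝ (MvP n) c := rfl
    rw [this, Derivation.map_algebraMap]
  rw [this, mul_zero, add_zero]

lemma coeff_lin (c : Fin n → ℝ) (u : Fin n) :
    coeff (Finsupp.single u 1) (∑ s, C (c s) * X s) = c u := by
  classical
  rw [coeff_sum]
  rw [Finset.sum_eq_single u]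
  · simp [coeff_C_mul, coeff_X]
  · intro s _ hs
    rw [coeff_C_mul, coeff_X', if_neg, mul_zero]
    intro h
    exact hs (by simpa using (Finsupp.single_left_inj (one_ne_zero)).mp h)
  · simp

lemma linDer_linear (A : Matrix (Fin n) (Fin n) ℝ) (c : Fin n → ℝ) :
    linDer A (∑ s, C (c s) * X s) = ∑ u, C (∑ s, c s * A s u) * X u := by
  rw [map_sum]
  have : ∀ s, linDer A (C (c s) * X s) = C (c s) * ∑ u, C (A s u) * X u := by
    intro s; rw [linDer_C_mul, linDer_X]
  simp_rw [this, Finset.mul_sum, ← mul_assoc, ← C_mul]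
  rw [Finset.sum_comm]
  refine Finset.sum_congr rfl fun u _ => ?_
  rw [map_sum, Finset.sum_mul]


lemma lin_eq_iff (c d : Fin n → ℝ) (h : (∑ s, C (c s) * X s : MvP n) = ∑ s, C (d s) * X s) : c = d := by
  funext u
  have := congrArg (coeff (Finsupp.single u 1)) h
  rwa [coeff_lin, coeff_lin] at this

lemma mat_comm {a : Fin n → Matrix (Fin n) (Fin n) ℝ}
    (hcomm : ∀ i j P, linVF (a i) (linVF (a j) P) = linVF (a j) (linVF (a i) P)) (i j : Fin n) :
    a i * a j = a j * a i := by
  ext t u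
  have h := hcomm i j (X t)
  simp only [linVF_eq] at h
  rw [linDer_X, linDer_linear, linDer_X, linDer_linear] at h
  have h2 := congrFun (lin_eq_iff _ _ h) u
  simp only [Matrix.mul_apply]
  rw [h2]

lemma linDer_entry {a : Fin n → Matrix (Fin n) (Fin n) ℝ}
    (hc : ∀ i j, a i * a j = a j * a i) (i k r : Fin n) :
    linDer (a i) (coeffMat a k r) = ∑ s, C (a i r s) * coeffMat a k s := by
  have e1 : linDer (a i) (coeffMat a k r) = ∑ u, C (∑ s, a k r s * a i s u) * X u :=
    linDer_linear (a i) (fun s => a k r s)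
  have e2 : (∑ s, C (a i r s) * coeffMat a k s : MvP n)
      = ∑ u, C (∑ s, a i r s * a k s u) * X u := by
    simp only [coeffMat]
    simp_rw [Finset.mul_sum, ← mul_assoc, ← C_mul]
    rw [Finset.sum_comm]
    exact Finset.sum_congr rfl fun u _ => by rw [map_sum, Finset.sum_mul]
  rw [e1, e2]
  refine Finset.sum_congr rfl fun u _ => ?_
  have h3 := congrFun (congrFun (hc k i) r) u
  simp only [Matrix.mul_apply] at h3
  rw [h3]

lemma der_prod {ι : Type*} [DecidableEq ι] (D : Derivation ℝ (MvP n) (MvP n))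
    (t : Finset ι) (f : ι → MvP n) :
    D (∏ i ∈ t, f i) = ∑ i ∈ t, (∏ j ∈ t.erase i, f j) * D (f i) := by
  induction t using Finset.induction_on with
  | empty => simp
  | @insert b t hb ih =>
    rw [Finset.prod_insert hb, D.leibniz, smul_eq_mul, smul_eq_mul, ih,
      Finset.sum_insert hb, Finset.erase_insert hb, Finset.mul_sum]
    rw [add_comm]
    congr 1
    refine Finset.sum_congr rfl fun i hi => ?_
    rw [Finset.erase_insert_of_ne (ne_of_mem_of_not_mem hi hb).symm ,
      Finset.prod_insert (fun hm => hb (Finset.mem_of_mem_erase hm))]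
    ring

lemma D_zsmul (D : Derivation ℝ (MvP n) (MvP n)) (z : ℤ) (x : MvP n) :
    D (z • x) = z • D x :=
  D.toLinearMap.toAddMonoidHom.map_zsmul z x

lemma det_updateCol_expand (M : Matrix (Fin n) (Fin n) (MvP n)) (j : Fin n) (c : Fin n → MvP n) :
    (M.updateCol j c).det
      = ∑ σ : Equiv.Perm (Fin n),
          Equiv.Perm.sign σ • (c (σ j) * ∏ i ∈ univ.erase j, M (σ i) i) := by
  rw [Matrix.det_apply]
  refine Finset.sum_congr rfl fun σ _ => ?_
  congr 1
  rw [← Finset.mul_prod_erase _ _ (Finset.mem_univ j)]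
  congr 1
  · rw [Matrix.updateCol_apply, if_pos rfl]
  · exact Finset.prod_congr rfl fun i hi => by
      rw [Matrix.updateCol_apply, if_neg (Finset.mem_erase.1 hi).1]

lemma derivation_det (D : Derivation ℝ (MvP n) (MvP n)) (M : Matrix (Fin n) (Fin n) (MvP n)) :
    D M.det = ∑ j, (M.updateCol j fun k => D (M k j)).det := by
  rw [Matrix.det_apply, map_sum]
  have h1 : ∀ σ : Equiv.Perm (Fin n),
      D (Equiv.Perm.sign σ • ∏ i, M (σ i) i)
        = ∑ j, Equiv.Perm.sign σ • ((∏ i ∈ univ.erase j, M (σ i) i) * D (M (σ j) j)) := by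
    intro σ
    rw [Units.smul_def, D_zsmul, der_prod, Finset.smul_sum]
    refine Finset.sum_congr rfl fun j _ => ?_
    rw [Units.smul_def]
  simp_rw [h1]
  rw [Finset.sum_comm]
  refine Finset.sum_congr rfl fun j _ => ?_
  rw [det_updateCol_expand]
  exact Finset.sum_congr rfl fun σ _ => by rw [mul_comm]

lemma linDer_det {a : Fin n → Matrix (Fin n) (Fin n) ℝ}
    (hc : ∀ i j, a i * a j = a j * a i) (i : Fin n) :
    linDer (a i) (coeffMat a).det = C (Matrix.trace (a i)) * (coeffMat a).det := by
  rw [derivation_det]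
  have h1 : ∀ r : Fin n,
      ((coeffMat a).updateCol r fun k => linDer (a i) (coeffMat a k r)).det
        = C (a i r r) * (coeffMat a).det := by
    intro r
    have : (fun k => linDer (a i) (coeffMat a k r))
        = fun k => ∑ s, (C (a i r s) : MvP n) • coeffMat a k s := by
      funext k
      rw [linDer_entry hc]
      simp [smul_eq_mul]
    rw [this, Matrix.det_updateCol_sum, smul_eq_mul]
  simp_rw [h1]
  rw [← Finset.sum_mul, Matrix.trace, map_sum]
  rfl

lemma Fdeg_add (d e : Fin n →₀ ℕ) : (d + e).degree = d.degree + e.degree := by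
  simp only [Finsupp.degree_eq_weight_one]
  exact map_add _ _ _

lemma degree_from_homog {P : MvP n} {m : ℕ} (h : P.IsHomogeneous m) {d : Fin n →₀ ℕ}
    (hd : coeff d P ≠ 0) : d.degree = m := by
  by_contra hne
  exact hd (h.coeff_eq_zero hne)

lemma isHomog_pderiv {P : MvP n} {m : ℕ} (h : P.IsHomogeneous (m + 1)) (r : Fin n) :
    (pderiv r P).IsHomogeneous m := by
  conv_lhs => rw [P.as_sum]
  rw [map_sum]
  apply IsHomogeneous.sum
  intro d hd
  rw [pderiv_monomial]
  by_cases h0 : d r = 0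
  · simp only [h0, Nat.cast_zero, mul_zero, map_zero]
    exact isHomogeneous_zero _ _ _
  · apply isHomogeneous_monomial
    have hdm : d.degree = m + 1 := degree_from_homog h (mem_support_iff.1 hd)
    have hle : Finsupp.single r 1 ≤ d := by
      rw [Finsupp.single_le_iff]; omega
    have hadd : (d - Finsupp.single r 1) + Finsupp.single r 1 = d :=
      tsub_add_cancel_of_le hle
    have hdeg : (d - Finsupp.single r 1).degree + (Finsupp.single r 1 : Fin n →₀ ℕ).degree
        = d.degree := by
      conv_rhs => rw [← hadd]
      rw [Fdeg_add]
    have hs1 : (Finsupp.single r 1 : Fin n →₀ ℕ).degree = 1 := by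
      rw [Finsupp.degree_single]
    omega

lemma isHomog_linForm (c : Fin n → ℝ) : (∑ s, C (c s) * X s : MvP n).IsHomogeneous 1 :=
  IsHomogeneous.sum _ _ _ fun s _ => isHomogeneous_C_mul_X _ _

lemma isHomog_zero_eq_C {Q : MvP n} (h : Q.IsHomogeneous 0) : Q = C (coeff 0 Q) := by
  ext d
  rw [coeff_C]
  by_cases hd : d = 0
  · subst hd; simp
  · rw [if_neg (Ne.symm hd)]
    apply h.coeff_eq_zero
    rw [Ne, Finsupp.degree_eq_zero_iff]
    exact hd

lemma linDer_isHomog (A : Matrix (Fin n) (Fin n) ℝ) {P : MvP n} {m : ℕ}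
    (h : P.IsHomogeneous m) : (linDer A P).IsHomogeneous m := by
  rw [← linVF_eq, linVF]
  apply IsHomogeneous.sum
  intro r _
  cases m with
  | zero =>
    rw [isHomog_zero_eq_C h, pderiv_C, mul_zero]
    exact isHomogeneous_zero _ _ _
  | succ k =>
    have := (isHomog_linForm (fun s => A r s)).mul (isHomog_pderiv h r)
    rwa [add_comm] at this

/-- If `P` is nonzero homogeneous of degree `k` and `P * Q` is homogeneous of degree `k`,
then `Q` is a constant. -/
lemma eq_C_of_homog_mul {k : ℕ} {P Q : MvP n} (hP : P.IsHomogeneous k) (hP0 : P ≠ 0)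
    (hPQ : (P * Q).IsHomogeneous k) : Q = C (coeff 0 Q) := by
  have hcomp : ∀ j, 0 < j → homogeneousComponent j Q = 0 := by
    intro j hj
    have hkey : P * homogeneousComponent j Q = homogeneousComponent (k + j) (P * Q) := by
      conv_rhs => rw [← Q.sum_homogeneousComponent]
      rw [Finset.mul_sum, map_sum]
      by_cases hjle : j ∈ Finset.range (Q.totalDegree + 1)
      · rw [Finset.sum_eq_single j]
        · exact (weightedHomogeneousComponent_eq_self
            (hP.mul (homogeneousComponent_isHomogeneous j Q))).symm
        · intro b _ hbj
          exact weightedHomogeneousComponent_of_isWeightedHomogeneous_ne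
            (hP.mul (homogeneousComponent_isHomogeneous b Q)) (by omega)
        · intro hj'; exact absurd hjle hj'
      · have hQj : homogeneousComponent j Q = 0 := by
          apply homogeneousComponent_eq_zero
          simp only [Finset.mem_range, not_lt] at hjle
          omega
        rw [hQj, mul_zero]
        symm
        apply Finset.sum_eq_zero
        intro b hb
        apply weightedHomogeneousComponent_of_isWeightedHomogeneous_ne
          (hP.mul (homogeneousComponent_isHomogeneous b Q))
        simp only [Finset.mem_range] at hb hjle
        omega
    have hz : homogeneousComponent (k + j) (P * Q) = 0 :=
      weightedHomogeneousComponent_of_isWeightedHomogeneous_ne hPQ (by omega)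
    rw [hz] at hkey
    rcases mul_eq_zero.1 hkey with h | h
    · exact absurd h hP0
    · exact h
  have : Q = homogeneousComponent 0 Q := by
    conv_lhs => rw [← Q.sum_homogeneousComponent]
    rw [Finset.sum_eq_single 0]
    · intro b _ hb; exact hcomp b (Nat.pos_of_ne_zero hb)
    · intro h; simp at h
  rw [this, homogeneousComponent_zero]
  simp

lemma linVF_mul (A : Matrix (Fin n) (Fin n) ℝ) (P Q : MvP n) :
    linVF A (P * Q) = P * linVF A Q + Q * linVF A P := by
  rw [linVF_eq, linVF_eq, linVF_eq, Derivation.leibniz, smul_eq_mul, smul_eq_mul]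

end JointEV


/-- If the determinant `D = det ℓ ≠ 0` of pairwise commuting linear vector fields factors
as `D = D₁ D₂` with `D₁, D₂` homogeneous without common divisor, then `D₁` and `D₂` are
joint eigenvectors of the `Y_i`, with eigenvalues summing to `div Y_i`. -/
theorem factors_of_det_are_joint_eigenvectors {n n₁ n₂ : ℕ} (hn : n₁ + n₂ = n)
    (a : Fin n → Matrix (Fin n) (Fin n) ℝ)
    (hcomm : ∀ i j P, linVF (a i) (linVF (a j) P) = linVF (a j) (linVF (a i) P))
    (hD : (coeffMat a).det ≠ 0)
    (D₁ D₂ : MvPolynomial (Fin n) ℝ)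
    (h₁ : D₁.IsHomogeneous n₁) (h₂ : D₂.IsHomogeneous n₂)
    (hfac : (coeffMat a).det = D₁ * D₂)
    (hcop : ∀ q : MvPolynomial (Fin n) ℝ, q ∣ D₁ → q ∣ D₂ → IsUnit q) :
    ∃ lam mu : Fin n → ℝ, ∀ i,
      linVF (a i) D₁ = C (lam i) * D₁ ∧
      linVF (a i) D₂ = C (mu i) * D₂ ∧
      lam i + mu i = Matrix.trace (a i) := by
  classical
  have hc : ∀ i j, a i * a j = a j * a i := JointEV.mat_comm hcomm
  have hD1 : D₁ ≠ 0 := fun h => hD (by rw [hfac, h, zero_mul])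
  have hrel : IsRelPrime D₁ D₂ := hcop
  have key : ∀ i, D₁ * linVF (a i) D₂ + D₂ * linVF (a i) D₁
      = C (Matrix.trace (a i)) * (D₁ * D₂) := by
    intro i
    rw [← JointEV.linVF_mul, ← hfac, JointEV.linVF_eq, JointEV.linDer_det hc, hfac]
  have H : ∀ i, ∃ l : ℝ, linVF (a i) D₁ = C l * D₁ := by
    intro i
    have hdvd : D₁ ∣ linVF (a i) D₁ * D₂ := by
      refine ⟨C (Matrix.trace (a i)) * D₂ - linVF (a i) D₂, ?_⟩
      linear_combination (key i) - D₂ * (JointEV.linVF_eq (a i) D₁)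
        - D₂ * (JointEV.linVF_eq (a i) D₁).symm
    obtain ⟨Q, hQ⟩ := hrel.dvd_of_dvd_mul_right hdvd
    by_cases hQ0 : Q = 0
    · exact ⟨0, by rw [hQ, hQ0, mul_zero, map_zero, zero_mul]⟩
    · have hhom : (D₁ * Q).IsHomogeneous n₁ := by
        rw [← hQ, JointEV.linVF_eq]
        exact JointEV.linDer_isHomog (a i) h₁
      refine ⟨coeff 0 Q, ?_⟩
      rw [hQ]
      conv_lhs => rw [JointEV.eq_C_of_homog_mul h₁ hD1 hhom]
      exact mul_comm _ _
  choose lam hlam using H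
  refine ⟨lam, fun i => Matrix.trace (a i) - lam i, fun i => ⟨hlam i, ?_, by ring⟩⟩
  have h0 : D₁ * (linVF (a i) D₂ - C (Matrix.trace (a i) - lam i) * D₂) = 0 := by
    have hk := key i
    rw [hlam i] at hk
    rw [map_sub]
    linear_combination hk
  rcases mul_eq_zero.1 h0 with h | h
  · exact absurd h hD1
  · exact sub_eq_zero.1 h
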